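/- Let (M³,g,f̃) be a compact oriented 3-manifold without boundary with f̃ satisfying the CPE equation −(Δf̃)g + Hess f̃ − f̃ Ric = Ric − (R/3)g. Then ∫_M (1+f̃)|Ric − (R/3)g|² dV = 0. -/
import Mathlib


open Finset

/-- Kronecker delta on `Fin 3`. -/
def kd (i j : Fin 3) : ℝ := if i = j then 1 else 0

/-- Covariant derivative of a (0,2)-tensor field in a local orthonormal frame. -/
def cov2 {M : Type*} (d : (M → ℝ) → Fin 3 → M → ℝ)
    (Γ : M → Fin 3 → Fin 3 → Fin 3 → ℝ)
    (T : M → Fin 3 → Fin 3 → ℝ) (k i j : Fin 3) (x : M) : ℝ :=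
  d (fun y => T y i j) k x - (∑ m, Γ x k i m * T x m j)
    - (∑ m, Γ x k j m * T x i m)

/-- Covariant divergence of a vector field in the frame. -/
def divg {M : Type*} (d : (M → ℝ) → Fin 3 → M → ℝ)
    (Γ : M → Fin 3 → Fin 3 → Fin 3 → ℝ) (X : M → Fin 3 → ℝ) (x : M) : ℝ :=
  ∑ k, (d (fun y => X y k) k x - ∑ m, Γ x k k m * X x m)

/-- Hessian components `f_{,ij}` in the frame. -/
def hess {M : Type*} (d : (M → ℝ) → Fin 3 → M → ℝ)
    (Γ : M → Fin 3 → Fin 3 → Fin 3 → ℝ) (f : M → ℝ) (i j : Fin 3) (x : M) : ℝ :=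
  d (fun y => d f i y) j x - ∑ m, Γ x j i m * d f m x

/-- Step in the proof of Theorem 1.1: on a closed oriented 3-manifold, a
solution `f̃` of the CPE equation `−(Δf̃)g + Hess f̃ − f̃ Ric = Ric − (R/3)g`
satisfies `∫_M (1+f̃)|Ric − (R/3)g|² dV = 0`.

The closed manifold is modelled by a point set `M`, a volume integral `vol`
(additive, homogeneous, and annihilating divergences — the divergence
theorem on a closed manifold), a local orthonormal frame derivation `d` with
metric connection coefficients `Γ`.  `hbianchi` is the contracted second
Bianchi identity `∑_j R_{ij,j} = (1/2)R_{,i} = 0` for the constant scalar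
curvature `R`. -/
theorem stmt_16 {M : Type*}
    (vol : (M → ℝ) → ℝ)
    (vol_add : ∀ g h : M → ℝ, (vol fun x => g x + h x) = vol g + vol h)
    (vol_smul : ∀ (c : ℝ) (g : M → ℝ), (vol fun x => c * g x) = c * vol g)
    (d : (M → ℝ) → Fin 3 → M → ℝ)
    (d_add : ∀ (f g : M → ℝ) k x,
      d (fun y => f y + g y) k x = d f k x + d g k x)
    (d_mul : ∀ (f g : M → ℝ) k x,
      d (fun y => f y * g y) k x = d f k x * g x + f x * d g k x)
    (d_const : ∀ (c : ℝ) k x, d (fun _ => c) k x = 0)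
    (Γ : M → Fin 3 → Fin 3 → Fin 3 → ℝ)
    (hΓ : ∀ x k i m, Γ x k i m = - Γ x k m i)
    (vol_div : ∀ X : M → Fin 3 → ℝ, vol (divg d Γ X) = 0)
    (f : M → ℝ) (Ric : M → Fin 3 → Fin 3 → ℝ) (R : ℝ)
    (hsymm : ∀ x i j, Ric x i j = Ric x j i)
    (hR : ∀ x, (∑ i, Ric x i i) = R)
    (hbianchi : ∀ x i, (∑ j, cov2 d Γ Ric j i j x) = 0)
    (hCPE : ∀ x i j,
      -(∑ k, hess d Γ f k k x) * kd i j + hess d Γ f i j x - f x * Ric x i j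
        = Ric x i j - (R / 3) * kd i j) :
    vol (fun x => (1 + f x) * ∑ i, ∑ j, (Ric x i j - (R / 3) * kd i j) ^ 2)
      = 0 := by
  -- derived linearity lemmas for `d`
  have d_smul : ∀ (c : ℝ) (g : M → ℝ) (k : Fin 3) (x : M),
      d (fun y => c * g y) k x = c * d g k x := by
    intro c g k x
    have h := d_mul (fun _ => c) g k x
    simpa [d_const] using h
  have d_sub : ∀ (g h : M → ℝ) (k : Fin 3) (x : M),
      d (fun y => g y - h y) k x = d g k x - d h k x := by
    intro g h k x
    have h1 := d_add (fun y => g y - h y) h k x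
    have h2 : (fun y => (g y - h y) + h y) = fun y => g y := by funext y; ring
    rw [h2] at h1
    linarith
  -- the vector field X_j = ∑_i f_{,i} R_{ij} - (R/3) f_{,j}
  have key : ∀ x : M,
      (1 + f x) * ∑ i, ∑ j, (Ric x i j - (R / 3) * kd i j) ^ 2
        = divg d Γ (fun y j => (∑ i, d f i y * Ric y i j) - (R/3) * d f j y) x := by
    intro x
    have hRx : Ric x 0 0 + Ric x 1 1 + Ric x 2 2 = R := by
      simpa [Fin.sum_univ_three] using hR x
    have hC : ∀ i j, -(∑ k, hess d Γ f k k x) * kd i j + hess d Γ f i j x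
        - f x * Ric x i j = Ric x i j - (R / 3) * kd i j := fun i j => hCPE x i j
    set T := ∑ k, hess d Γ f k k x with hTdef
    have hhess : ∀ i j, hess d Γ f i j x
        = (1 + f x) * Ric x i j + (T - R/3) * kd i j := by
      intro i j
      linear_combination hC i j
    have hTsum : T = hess d Γ f 0 0 x + hess d Γ f 1 1 x + hess d Γ f 2 2 x := by
      rw [hTdef, Fin.sum_univ_three]
    have hT : T = -(f x * R) / 2 := by
      rw [hhess 0 0, hhess 1 1, hhess 2 2] at hTsum
      simp only [kd, Fin.reduceEq, reduceIte] at hTsum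
      linear_combination (-(1:ℝ)/2) * hTsum - ((1 + f x)/2) * hRx
    have hhess2 : ∀ i j, hess d Γ f i j x
        = (1 + f x) * Ric x i j + (-(f x * R) / 2 - R/3) * kd i j := by
      intro i j; rw [hhess i j, hT]
    -- step 1 : ∑ hess·E = (1+f)|E|²
    have h1 : (∑ i, ∑ j, hess d Γ f i j x * (Ric x i j - (R / 3) * kd i j))
        = (1 + f x) * ∑ i, ∑ j, (Ric x i j - (R / 3) * kd i j) ^ 2 := by
      simp only [Fin.sum_univ_three, hhess2, kd, Fin.reduceEq, reduceIte]
      linear_combination (-(f x * R) / 6) * hRx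
    -- step 2 : divergence identity
    have h2 : divg d Γ (fun y j => (∑ i, d f i y * Ric y i j) - (R/3) * d f j y) x
        = (∑ i, ∑ j, hess d Γ f i j x * (Ric x i j - (R / 3) * kd i j))
          + ∑ i, d f i x * (∑ j, cov2 d Γ Ric j i j x) := by
      have hdiag : ∀ k i, Γ x k i i = 0 := by
        intro k i; have := hΓ x k i i; linarith
      have h10 : ∀ k, Γ x k 1 0 = -Γ x k 0 1 := fun k => hΓ x k 1 0
      have h20 : ∀ k, Γ x k 2 0 = -Γ x k 0 2 := fun k => hΓ x k 2 0
      have h21 : ∀ k, Γ x k 2 1 = -Γ x k 1 2 := fun k => hΓ x k 2 1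
      simp only [divg, hess, cov2, Fin.sum_univ_three, kd, Fin.reduceEq, reduceIte]
      simp only [d_sub, d_smul, d_add, d_mul]
      simp only [hdiag, h10, h20, h21]
      ring
    rw [h2]
    simp only [hbianchi, mul_zero, Finset.sum_const_zero, add_zero]
    exact h1.symm
  calc vol (fun x => (1 + f x) * ∑ i, ∑ j, (Ric x i j - (R / 3) * kd i j) ^ 2)
      = vol (divg d Γ (fun y j => (∑ i, d f i y * Ric y i j) - (R/3) * d f j y)) := by
        exact congrArg vol (funext fun x => key x)
    _ = 0 := vol_div _
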